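/- If G and G' are simple graphs each with n vertices and m ≥ 1 edges, and the degree sequence of G (sorted in non-increasing order) majorizes the degree sequence of G', then I_d(G) ≤ I_d(G'), with equality if and only if the degree sequences of G and G' are equal. -/

import Mathlib

open Finset

/-- Degree-based entropy: `I_d(G) = log₂(2m) - (1/(2m)) ∑_v d(v) log₂ d(v)`. -/
noncomputable def degEntropy {V : Type} [Fintype V] (G : SimpleGraph V) : ℝ :=
  Real.logb 2 (2 * (G.edgeSet.ncard : ℝ)) -
    (1 / (2 * (G.edgeSet.ncard : ℝ))) *
      ∑ v : V, ((G.neighborSet v).ncard : ℝ) * Real.logb 2 ((G.neighborSet v).ncard)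

/-- The degree sequence of `G`, sorted in non-increasing order. -/
noncomputable def degSeq {n : ℕ} (G : SimpleGraph (Fin n)) : List ℕ :=
  ((Finset.univ.val.map fun v => (G.neighborSet v).ncard).sort (· ≤ ·)).reverse

/-- `A` majorizes `B`. -/
def Majorizes (A B : List ℕ) : Prop :=
  (∀ s : ℕ, (B.take s).sum ≤ (A.take s).sum) ∧ A.sum = B.sum

/-! ### Auxiliary lemmas -/

noncomputable def gR (k : ℕ) : ℝ := (k : ℝ) * Real.logb 2 k

noncomputable def cR (k : ℕ) : ℝ := if k = 0 then 0 else Real.logb 2 k + 1 / Real.log 2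

lemma gR_zero : gR 0 = 0 := by simp [gR]

lemma gR_nonneg (k : ℕ) : 0 ≤ gR k := by
  rcases Nat.eq_zero_or_pos k with rfl | hk
  · simp [gR]
  · have h1 : (1:ℝ) ≤ k := by exact_mod_cast hk
    have := Real.logb_nonneg (by norm_num : (1:ℝ) < 2) h1
    have hk0 : (0:ℝ) ≤ k := by positivity
    exact mul_nonneg hk0 this

lemma cR_mono : Monotone cR := by
  intro a b hab
  unfold cR
  by_cases ha : a = 0
  · subst ha
    by_cases hb : b = 0
    · simp [hb]
    · rw [if_pos rfl, if_neg hb]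
      have h1 : (1:ℝ) ≤ b := by exact_mod_cast Nat.one_le_iff_ne_zero.mpr hb
      have h2 := Real.logb_nonneg (by norm_num : (1:ℝ) < 2) h1
      have h3 : (0:ℝ) < Real.log 2 := Real.log_pos (by norm_num)
      positivity
  · have hb : b ≠ 0 := by
      intro h; exact ha (Nat.le_zero.mp (h ▸ hab))
    rw [if_neg ha, if_neg hb]
    have ha0 : (0:ℝ) < a := by
      have := Nat.one_le_iff_ne_zero.mpr ha
      exact_mod_cast this
    have : Real.logb 2 (a:ℝ) ≤ Real.logb 2 (b:ℝ) :=
      Real.logb_le_logb_of_le (by norm_num) ha0 (by exact_mod_cast hab)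
    linarith

lemma key_lt (a b : ℕ) (hb : 1 ≤ b) (hab : a ≠ b) :
    cR b * ((a:ℝ) - b) < gR a - gR b := by
  have hb0 : (0:ℝ) < b := by exact_mod_cast hb
  have hlog2 : (0:ℝ) < Real.log 2 := Real.log_pos (by norm_num)
  have main : (Real.log b + 1) * ((a:ℝ) - b) < (a:ℝ) * Real.log a - b * Real.log b := by
    rcases Nat.eq_zero_or_pos a with rfl | ha
    · simp only [Nat.cast_zero, Real.log_zero, zero_mul, zero_sub]
      nlinarith
    · have ha0 : (0:ℝ) < a := by exact_mod_cast ha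
      have hx1 : (b:ℝ)/a ≠ 1 := by
        intro h
        rw [div_eq_one_iff_eq (ne_of_gt ha0)] at h
        exact hab (by exact_mod_cast h.symm)
      have hx : Real.log ((b:ℝ)/a) < (b:ℝ)/a - 1 :=
        Real.log_lt_sub_one_of_pos (by positivity) hx1
      have hlog : Real.log ((b:ℝ)/a) = Real.log b - Real.log a :=
        Real.log_div (ne_of_gt hb0) (ne_of_gt ha0)
      rw [hlog] at hx
      have h4 := mul_lt_mul_of_pos_left hx ha0
      have h5 : (a:ℝ) * ((b:ℝ)/a - 1) = (b:ℝ) - a := by field_simp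
      nlinarith
  have e1 : cR b * ((a:ℝ) - b) = (Real.log b + 1) * ((a:ℝ) - b) * (1 / Real.log 2) := by
    rw [cR, if_neg (by omega), Real.logb]
    field_simp
  have e2 : gR a - gR b = ((a:ℝ) * Real.log a - (b:ℝ) * Real.log b) * (1 / Real.log 2) := by
    simp only [gR, Real.logb]
    field_simp
  rw [e1, e2]
  have hL : (0:ℝ) < 1 / Real.log 2 := by positivity
  exact mul_lt_mul_of_pos_right main hL

lemma key_le (a b : ℕ) : cR b * ((a:ℝ) - b) ≤ gR a - gR b := by
  rcases Nat.eq_zero_or_pos b with rfl | hb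
  · have hc : cR 0 = 0 := by simp [cR]
    rw [hc, zero_mul, gR_zero, sub_zero]
    exact gR_nonneg a
  · rcases eq_or_ne a b with rfl | h
    · simp
    · exact (key_lt a b hb h).le

lemma abel_nonneg (n : ℕ) (f d : ℕ → ℝ)
    (hf : ∀ i, i + 1 < n → f (i + 1) ≤ f i)
    (hd : ∀ s : ℕ, 0 ≤ ∑ i ∈ range s, d i)
    (hd0 : ∑ i ∈ range n, d i = 0) :
    0 ≤ ∑ i ∈ range n, f i * d i := by
  have hparts := Finset.sum_range_by_parts f d n
  simp only [smul_eq_mul] at hparts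
  rw [hparts, hd0, mul_zero]
  have h : ∀ i ∈ range (n - 1), (f (i + 1) - f i) * (∑ j ∈ range (i + 1), d j) ≤ 0 := by
    intro i hi
    have hi' : i + 1 < n := by
      have := mem_range.mp hi; omega
    exact mul_nonpos_of_nonpos_of_nonneg (sub_nonpos.mpr (hf i hi')) (hd _)
  have := Finset.sum_nonpos h
  linarith

lemma sum_range_getD {M : Type*} [AddCommMonoid M] (L : List M) (s : ℕ) :
    ∑ i ∈ range s, L.getD i 0 = (L.take s).sum := by
  induction s with
  | zero => simp
  | succ s ih =>
    rw [Finset.sum_range_succ, ih]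
    by_cases h : s < L.length
    · rw [List.sum_take_succ L s h, List.getD_eq_getElem L 0 h]
    · have h' : L.length ≤ s := le_of_not_gt h
      rw [List.getD_eq_default L 0 h', List.take_of_length_le h',
        List.take_of_length_le (h'.trans (Nat.le_succ s)), add_zero]

lemma list_main {n : ℕ} {A B : List ℕ} (hA : A.length = n) (hB : B.length = n)
    (hBs : List.Pairwise (fun x y : ℕ => y ≤ x) B) (hmaj : Majorizes A B) :
    ∑ i ∈ range n, gR (B.getD i 0) ≤ ∑ i ∈ range n, gR (A.getD i 0) ∧
      (A ≠ B → ∑ i ∈ range n, gR (B.getD i 0) < ∑ i ∈ range n, gR (A.getD i 0)) := by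
  set d : ℕ → ℝ := fun i => ((A.getD i 0 : ℕ) : ℝ) - ((B.getD i 0 : ℕ) : ℝ) with hd_def
  have hsum : ∀ (L : List ℕ) (s : ℕ),
      ∑ i ∈ range s, ((L.getD i 0 : ℕ) : ℝ) = ((L.take s).sum : ℝ) := by
    intro L s
    rw [← Nat.cast_sum, sum_range_getD]
  have hdpart : ∀ s : ℕ, 0 ≤ ∑ i ∈ range s, d i := by
    intro s
    have h : ∑ i ∈ range s, d i = ((A.take s).sum : ℝ) - ((B.take s).sum : ℝ) := by
      rw [hd_def, Finset.sum_sub_distrib, hsum, hsum]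
    rw [h, sub_nonneg]
    exact_mod_cast hmaj.1 s
  have hd0 : ∑ i ∈ range n, d i = 0 := by
    have h : ∑ i ∈ range n, d i = ((A.take n).sum : ℝ) - ((B.take n).sum : ℝ) := by
      rw [hd_def, Finset.sum_sub_distrib, hsum, hsum]
    rw [h, List.take_of_length_le hA.le, List.take_of_length_le hB.le, hmaj.2, sub_self]
  have hf : ∀ i, i + 1 < n → cR (B.getD (i + 1) 0) ≤ cR (B.getD i 0) := by
    intro i hi
    apply cR_mono
    have h1 : i + 1 < B.length := by omega
    have h0 : i < B.length := by omega
    rw [List.getD_eq_getElem B 0 h1, List.getD_eq_getElem B 0 h0]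
    exact hBs.rel_get_of_lt (a := ⟨i, h0⟩) (b := ⟨i + 1, h1⟩) (by simp [Fin.lt_def])
  have habel : 0 ≤ ∑ i ∈ range n, cR (B.getD i 0) * d i :=
    abel_nonneg n (fun i => cR (B.getD i 0)) d hf hdpart hd0
  have hpt : ∀ i ∈ range n, cR (B.getD i 0) * d i ≤ gR (A.getD i 0) - gR (B.getD i 0) :=
    fun i _ => key_le _ _
  have hsub : ∑ i ∈ range n, (gR (A.getD i 0) - gR (B.getD i 0))
      = ∑ i ∈ range n, gR (A.getD i 0) - ∑ i ∈ range n, gR (B.getD i 0) :=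
    Finset.sum_sub_distrib _ _
  constructor
  · have h := Finset.sum_le_sum hpt
    rw [hsub] at h
    linarith
  · intro hne
    have hdiff : ∃ i ∈ range n, A.getD i 0 ≠ B.getD i 0 := by
      by_contra hc
      push_neg at hc
      apply hne
      apply List.ext_getElem (hA.trans hB.symm)
      intro i h1 h2
      have h3 := hc i (mem_range.mpr (hA ▸ h1))
      rwa [List.getD_eq_getElem A 0 h1, List.getD_eq_getElem B 0 h2] at h3
    set D := (range n).filter (fun i => A.getD i 0 ≠ B.getD i 0) with hD_def
    have hDne : D.Nonempty := by
      obtain ⟨i, hi1, hi2⟩ := hdiff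
      exact ⟨i, mem_filter.mpr ⟨hi1, hi2⟩⟩
    set k := D.max' hDne with hk_def
    have hkD : k ∈ D := D.max'_mem hDne
    have hkn : k < n := mem_range.mp (mem_filter.mp hkD).1
    have hkne : A.getD k 0 ≠ B.getD k 0 := (mem_filter.mp hkD).2
    have hafter : ∀ i, k < i → i < n → A.getD i 0 = B.getD i 0 := by
      intro i hki hin
      by_contra hc
      have hiD : i ∈ D := mem_filter.mpr ⟨mem_range.mpr hin, hc⟩
      exact absurd (D.le_max' i hiD) (not_le.mpr hki)
    have hDk1 : ∑ i ∈ range (k + 1), d i = 0 := by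
      have hsplit : ∑ i ∈ Ico 0 (k + 1), d i + ∑ i ∈ Ico (k + 1) n, d i
          = ∑ i ∈ Ico 0 n, d i :=
        Finset.sum_Ico_consecutive d (Nat.zero_le _) hkn
      have htail : ∑ i ∈ Ico (k + 1) n, d i = 0 := by
        apply Finset.sum_eq_zero
        intro i hi
        obtain ⟨h1, h2⟩ := mem_Ico.mp hi
        have h3 := hafter i (by omega) h2
        show ((A.getD i 0 : ℕ) : ℝ) - ((B.getD i 0 : ℕ) : ℝ) = 0
        rw [h3, sub_self]
      rw [← Nat.Ico_zero_eq_range] at hd0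
      rw [← Nat.Ico_zero_eq_range]
      linarith
    have hdk_le : d k ≤ 0 := by
      have h1 := Finset.sum_range_succ d k
      have h2 := hdpart k
      rw [hDk1] at h1
      linarith
    have hdk_ne : d k ≠ 0 := by
      rw [hd_def]
      simp only
      intro h
      apply hkne
      have : ((A.getD k 0 : ℕ) : ℝ) = ((B.getD k 0 : ℕ) : ℝ) := by linarith [sub_eq_zero.mp h]
      exact_mod_cast this
    have hblt : A.getD k 0 < B.getD k 0 := by
      have h : ((A.getD k 0 : ℕ) : ℝ) < ((B.getD k 0 : ℕ) : ℝ) := by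
        have := lt_of_le_of_ne hdk_le hdk_ne
        rw [hd_def] at this
        simp only at this
        linarith
      exact_mod_cast h
    have hb1 : 1 ≤ B.getD k 0 := by omega
    have hstrict : cR (B.getD k 0) * d k < gR (A.getD k 0) - gR (B.getD k 0) :=
      key_lt (A.getD k 0) (B.getD k 0) hb1 hkne
    have hlt := Finset.sum_lt_sum hpt ⟨k, mem_range.mpr hkn, hstrict⟩
    rw [hsub] at hlt
    linarith

lemma degSeq_length {n : ℕ} (G : SimpleGraph (Fin n)) : (degSeq G).length = n := by
  simp [degSeq, Multiset.length_sort]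

lemma degSeq_sorted {n : ℕ} (G : SimpleGraph (Fin n)) :
    List.Pairwise (fun x y : ℕ => y ≤ x) (degSeq G) := by
  unfold degSeq
  rw [List.pairwise_reverse]
  exact Multiset.pairwise_sort _ (· ≤ ·)

lemma getD_map_gR (L : List ℕ) (i : ℕ) : (L.map gR).getD i 0 = gR (L.getD i 0) := by
  by_cases h : i < L.length
  · rw [List.getD_eq_getElem _ _ (by simpa using h), List.getD_eq_getElem _ _ h,
      List.getElem_map]
  · rw [List.getD_eq_default _ _ (by simpa using not_lt.mp h),
      List.getD_eq_default _ _ (not_lt.mp h), gR_zero]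

lemma degSeq_entropy_sum {n : ℕ} (G : SimpleGraph (Fin n)) :
    ∑ v : Fin n, ((G.neighborSet v).ncard : ℝ) * Real.logb 2 ((G.neighborSet v).ncard)
      = ∑ i ∈ range n, gR ((degSeq G).getD i 0) := by
  have h1 : ∑ i ∈ range n, gR ((degSeq G).getD i 0) = ((degSeq G).map gR).sum := by
    have hlen : ((degSeq G).map gR).length = n := by
      rw [List.length_map, degSeq_length]
    calc ∑ i ∈ range n, gR ((degSeq G).getD i 0)
        = ∑ i ∈ range n, ((degSeq G).map gR).getD i 0 := by
          refine Finset.sum_congr rfl fun i _ => ?_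
          rw [getD_map_gR]
      _ = (((degSeq G).map gR).take n).sum := sum_range_getD _ n
      _ = ((degSeq G).map gR).sum := by rw [List.take_of_length_le hlen.le]
  rw [h1]
  unfold degSeq
  rw [List.map_reverse, List.sum_reverse]
  have h2 : (((Finset.univ.val.map fun v : Fin n => (G.neighborSet v).ncard).sort
      (· ≤ ·)).map gR).sum
      = (Multiset.map gR (Finset.univ.val.map fun v : Fin n => (G.neighborSet v).ncard)).sum := by
    conv_rhs => rw [← Multiset.sort_eq (r := (· ≤ ·))
      (s := Finset.univ.val.map fun v : Fin n => (G.neighborSet v).ncard)]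
    rfl
  rw [h2, Multiset.map_map]
  rfl

/-- majorization of degree sequences reverses the order of degree-based
entropies, with equality iff the degree sequences coincide. -/
theorem entropy_le_of_majorizes {n m : ℕ} (hm : 1 ≤ m) (G G' : SimpleGraph (Fin n))
    (hG : G.edgeSet.ncard = m) (hG' : G'.edgeSet.ncard = m)
    (hmaj : Majorizes (degSeq G) (degSeq G')) :
    degEntropy G ≤ degEntropy G' ∧ (degEntropy G = degEntropy G' ↔ degSeq G = degSeq G') := by
  obtain ⟨hle, hlt⟩ := list_main (degSeq_length G) (degSeq_length G') (degSeq_sorted G') hmaj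
  have hc : (0:ℝ) < 1 / (2 * (m:ℝ)) := by
    have : (1:ℝ) ≤ m := by exact_mod_cast hm
    positivity
  have eG : degEntropy G
      = Real.logb 2 (2 * (m:ℝ)) - (1 / (2 * (m:ℝ))) * ∑ i ∈ range n, gR ((degSeq G).getD i 0) := by
    unfold degEntropy
    rw [hG, degSeq_entropy_sum]
  have eG' : degEntropy G'
      = Real.logb 2 (2 * (m:ℝ))
        - (1 / (2 * (m:ℝ))) * ∑ i ∈ range n, gR ((degSeq G').getD i 0) := by
    unfold degEntropy
    rw [hG', degSeq_entropy_sum]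
  constructor
  · rw [eG, eG']
    have := mul_le_mul_of_nonneg_left hle hc.le
    linarith
  · constructor
    · intro heq
      by_contra hne
      have h1 := hlt hne
      rw [eG, eG'] at heq
      have h2 := mul_lt_mul_of_pos_left h1 hc
      linarith
    · intro h
      rw [eG, eG', h]
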